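/- arXiv:2212.01192 — 5 statements merged into one kernel-verified Lean document; each statement's English description precedes it below -/
import Mathlib

section
/- Let (Ω, μ) be a probability space, w : Ω → ℝ^{n_w} a random vector and Z : Ω → ℝ^{n_z × n_z} a random symmetric matrix, with w and Z independent. Assume w_i w_j Z_{kl} Z_{k'l'} is integrable for all indices and let W_{ij} = E[w_i w_j]. Let M_1, …, M_{n_w} ∈ ℝ^{n_x × n_z} and define the sampled operator E_w(ω)(Z) = Σ_{j,ℓ=1}^{n_w} w_j(ω) w_ℓ(ω) M_j Z M_ℓᵀ. Then for all indices k, l, p, q, E[Z_{kl} · (E_w(Z) − E(Z))_{pq}] = 0; that is, the instrumental variable Z is uncorrelated with the temporal-difference model error E_w(Z) − E(Z). -/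
set_option maxHeartbeats 1000000


open Matrix BigOperators MeasureTheory ProbabilityTheory

/-- The canonical (entrywise / pi-type) measurable space on real matrices. -/
instance matrixMeasurableSpace (m n : Type*) : MeasurableSpace (Matrix m n ℝ) :=
  show MeasurableSpace (m → n → ℝ) from inferInstance

/-- Key lemma: if `X` and `Y` are independent, `X * Y` is integrable, and
`c = E[X]`, then `(X - c) * Y` is integrable with integral zero. -/
lemma centered_mul_indep_integral {Ω : Type*} [MeasurableSpace Ω]
    (μ : Measure Ω) [IsProbabilityMeasure μ]
    (X Y : Ω → ℝ) (hX : Measurable X) (hY : Measurable Y)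
    (hXY : IndepFun X Y μ) (hmul : Integrable (fun ω => X ω * Y ω) μ) (c : ℝ)
    (hc : c = ∫ ω, X ω ∂μ) :
    Integrable (fun ω => (X ω - c) * Y ω) μ ∧ (∫ ω, (X ω - c) * Y ω ∂μ) = 0 := by
  have hmul' : Integrable (X * Y) μ := hmul
  by_cases hYi : Integrable Y μ
  · have h1 : Integrable (fun ω => X ω * Y ω - c * Y ω) μ := hmul.sub (hYi.const_mul c)
    have heq : (fun ω => (X ω - c) * Y ω) = fun ω => X ω * Y ω - c * Y ω := by
      funext ω; ring
    constructor
    · rw [heq]; exact h1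
    · have hm : (∫ ω, X ω * Y ω ∂μ) = (∫ ω, X ω ∂μ) * ∫ ω, Y ω ∂μ :=
        hXY.integral_fun_mul_eq_mul_integral hX.aestronglyMeasurable hY.aestronglyMeasurable
      rw [heq, integral_sub hmul (hYi.const_mul c), integral_const_mul, hm, ← hc]
      ring
  · have hX0 : X =ᵐ[μ] 0 := by
      by_contra h
      exact hYi (hXY.integrable_right_of_integrable_op (· * ·) 1 one_ne_zero
          (fun x y => by simp [enorm_mul]) hmul hX.aestronglyMeasurable
        hY.aestronglyMeasurable h)
    have hc0 : c = 0 := by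
      rw [hc, integral_congr_ae hX0]; simp
    have hae : (fun ω => (X ω - c) * Y ω) =ᵐ[μ] 0 := by
      filter_upwards [hX0] with ω h
      simp only [Pi.zero_apply] at h ⊢
      simp [h, hc0]
    exact ⟨(integrable_zero _ _ _).congr hae.symm, by rw [integral_congr_ae hae]; simp⟩

/-- The instrumental variable `Z` is uncorrelated with the temporal-difference
model error `E_w(Z) − E(Z)`, when the random vector `w` and the random symmetric
matrix `Z` are independent and `W i j = E[w_i w_j]`. -/
theorem iv_uncorrelated_td_error {Ω : Type*} [MeasurableSpace Ω]
    (μ : Measure Ω) [IsProbabilityMeasure μ]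
    (n_w n_x n_z : ℕ)
    (w : Ω → Fin n_w → ℝ) (Z : Ω → Matrix (Fin n_z) (Fin n_z) ℝ)
    (hw : Measurable w) (hZ : Measurable Z)
    (hZsymm : ∀ ω, (Z ω).IsSymm)
    (hindep : IndepFun w Z μ)
    (hint : ∀ (i j : Fin n_w) (k l k' l' : Fin n_z),
      Integrable (fun ω => w ω i * w ω j * Z ω k l * Z ω k' l') μ)
    (W : Matrix (Fin n_w) (Fin n_w) ℝ)
    (hW : ∀ i j : Fin n_w, W i j = ∫ ω, w ω i * w ω j ∂μ)
    (M : Fin n_w → Matrix (Fin n_x) (Fin n_z) ℝ) :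
    ∀ (k l : Fin n_z) (p q : Fin n_x),
      (∫ ω, Z ω k l *
        ((∑ j : Fin n_w, ∑ ℓ : Fin n_w, (w ω j * w ω ℓ) • (M j * Z ω * (M ℓ)ᵀ)) -
         (∑ i : Fin n_w, ∑ j : Fin n_w, W i j • (M i * Z ω * (M j)ᵀ))) p q ∂μ) = 0 := by
  intro k l p q
  set T : Fin n_w → Fin n_w → Fin n_z → Fin n_z → Ω → ℝ := fun j ℓ a b ω =>
    (w ω j * w ω ℓ - W j ℓ) * (Z ω k l * Z ω b a * (M j p b * M ℓ q a)) with hT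
  have hZm : ∀ (a b : Fin n_z), Measurable (fun ω => Z ω a b) := fun a b =>
    (measurable_pi_apply b).comp ((measurable_pi_apply a).comp hZ)
  have hTkey : ∀ j ℓ a b, Integrable (T j ℓ a b) μ ∧ (∫ ω, T j ℓ a b ω ∂μ) = 0 := by
    intro j ℓ a b
    have hX : Measurable (fun ω => w ω j * w ω ℓ) :=
      ((measurable_pi_apply j).comp hw).mul ((measurable_pi_apply ℓ).comp hw)
    have hY : Measurable (fun ω => Z ω k l * Z ω b a * (M j p b * M ℓ q a)) :=
      (((hZm k l).mul (hZm b a)).mul measurable_const)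
    have hf : Measurable (fun v : Fin n_w → ℝ => v j * v ℓ) :=
      (measurable_pi_apply j).mul (measurable_pi_apply ℓ)
    have hg : Measurable (fun A : Matrix (Fin n_z) (Fin n_z) ℝ =>
        A k l * A b a * (M j p b * M ℓ q a)) := by
      have h1 : Measurable (fun A : Matrix (Fin n_z) (Fin n_z) ℝ => A k l) :=
        (measurable_pi_apply l).comp (measurable_pi_apply k)
      have h2 : Measurable (fun A : Matrix (Fin n_z) (Fin n_z) ℝ => A b a) :=
        (measurable_pi_apply a).comp (measurable_pi_apply b)
      exact (h1.mul h2).mul measurable_const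
    have hind : IndepFun (fun ω => w ω j * w ω ℓ)
        (fun ω => Z ω k l * Z ω b a * (M j p b * M ℓ q a)) μ := hindep.comp hf hg
    have hmul : Integrable
        (fun ω => (w ω j * w ω ℓ) * (Z ω k l * Z ω b a * (M j p b * M ℓ q a))) μ := by
      have h1 := (hint j ℓ k l b a).mul_const (M j p b * M ℓ q a)
      have heq : (fun ω => (w ω j * w ω ℓ) * (Z ω k l * Z ω b a * (M j p b * M ℓ q a)))
          = fun ω => w ω j * w ω ℓ * Z ω k l * Z ω b a * (M j p b * M ℓ q a) := by
        funext ω; ring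
      rw [heq]; exact h1
    exact centered_mul_indep_integral μ _ _ hX hY hind hmul (W j ℓ) (hW j ℓ)
  have hpt : ∀ ω, Z ω k l *
        ((∑ j : Fin n_w, ∑ ℓ : Fin n_w, (w ω j * w ω ℓ) • (M j * Z ω * (M ℓ)ᵀ)) -
         (∑ i : Fin n_w, ∑ j : Fin n_w, W i j • (M i * Z ω * (M j)ᵀ))) p q
      = ∑ j : Fin n_w, ∑ ℓ : Fin n_w, ∑ a : Fin n_z, ∑ b : Fin n_z, T j ℓ a b ω := by
    intro ω
    simp only [hT, Matrix.sub_apply, Matrix.sum_apply, Matrix.smul_apply, smul_eq_mul,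
      Matrix.mul_apply, Matrix.transpose_apply, Finset.sum_mul, Finset.mul_sum,
      sub_mul, mul_sub]
    simp only [Finset.sum_sub_distrib]
    congr 1
    · apply Finset.sum_congr rfl; intro j _
      apply Finset.sum_congr rfl; intro ℓ _
      apply Finset.sum_congr rfl; intro a _
      apply Finset.sum_congr rfl; intro b _
      ring
    · apply Finset.sum_congr rfl; intro j _
      apply Finset.sum_congr rfl; intro ℓ _
      apply Finset.sum_congr rfl; intro a _
      apply Finset.sum_congr rfl; intro b _
      ring
  rw [integral_congr_ae (Filter.EventuallyEq.of_eq (funext hpt))]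
  rw [integral_finset_sum _ fun j _ => integrable_finset_sum _ fun ℓ _ =>
    integrable_finset_sum _ fun a _ => integrable_finset_sum _ fun b _ => (hTkey j ℓ a b).1]
  refine Finset.sum_eq_zero fun j _ => ?_
  rw [integral_finset_sum _ fun ℓ _ =>
    integrable_finset_sum _ fun a _ => integrable_finset_sum _ fun b _ => (hTkey j ℓ a b).1]
  refine Finset.sum_eq_zero fun ℓ _ => ?_
  rw [integral_finset_sum _ fun a _ => integrable_finset_sum _ fun b _ => (hTkey j ℓ a b).1]
  refine Finset.sum_eq_zero fun a _ => ?_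
  rw [integral_finset_sum _ fun b _ => (hTkey j ℓ a b).1]
  exact Finset.sum_eq_zero fun b _ => (hTkey j ℓ a b).2
end

section
/- Let X ∈ ℝ^{n_x × n_x} be symmetric positive definite and let M ∈ ℝ^{(n_x+n_u) × (n_x+n_u)} be symmetric with block partition M = [[M_xx, M_uxᵀ], [M_ux, M_uu]] such that M_uu is positive definite. Set K⋆ = −M_uu^{-1} M_ux. If a gain K ∈ ℝ^{n_u × n_x} satisfies tr[X · (M_xx + Kᵀ M_ux + M_uxᵀ K + Kᵀ M_uu K)] = tr[X · (M_xx − M_uxᵀ M_uu^{-1} M_ux)], then K = K⋆; i.e., the minimizer of K ↦ tr[X · L_K M L_Kᵀ] is unique when X is positive definite. -/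
open Matrix BigOperators

private lemma trace_transpose_mul_self_eq_zero {m n : ℕ}
    (M : Matrix (Fin m) (Fin n) ℝ) (h : (Mᵀ * M).trace = 0) : M = 0 := by
  have h' : ∑ j : Fin n, ∑ i : Fin m, M i j ^ 2 = 0 := by
    simpa [Matrix.trace, Matrix.diag, Matrix.mul_apply, sq] using h
  ext i j
  have hj := (Finset.sum_eq_zero_iff_of_nonneg (fun j _ =>
    Finset.sum_nonneg fun i _ => sq_nonneg (M i j))).mp h' j (Finset.mem_univ j)
  have hi := (Finset.sum_eq_zero_iff_of_nonneg (fun i _ => sq_nonneg (M i j))).mp hj i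
    (Finset.mem_univ i)
  simpa using pow_eq_zero_iff (n := 2) (by norm_num) |>.mp hi

/-- When `X ≻ 0`, the minimizer of `K ↦ tr[X * (M_xx + Kᵀ M_ux + M_uxᵀ K + Kᵀ M_uu K)]`
is unique: any `K` achieving the minimum value `tr[X * (M_xx − M_uxᵀ M_uu⁻¹ M_ux)]`
equals `K⋆ = −M_uu⁻¹ M_ux`. -/
theorem trace_quadratic_gain_min_unique (n_x n_u : ℕ)
    (X : Matrix (Fin n_x) (Fin n_x) ℝ) (hX : X.PosDef)
    (Mxx : Matrix (Fin n_x) (Fin n_x) ℝ) (hMxx : Mxx.IsSymm)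
    (Mux : Matrix (Fin n_u) (Fin n_x) ℝ)
    (Muu : Matrix (Fin n_u) (Fin n_u) ℝ) (hMuu : Muu.PosDef)
    (K : Matrix (Fin n_u) (Fin n_x) ℝ)
    (hK : (X * (Mxx + Kᵀ * Mux + Muxᵀ * K + Kᵀ * Muu * K)).trace =
      (X * (Mxx - Muxᵀ * Muu⁻¹ * Mux)).trace) :
    K = -(Muu⁻¹ * Mux) := by
  have hMuuDet : IsUnit Muu.det := isUnit_iff_ne_zero.mpr (ne_of_gt hMuu.det_pos)
  have hMuuSymm : Muuᵀ = Muu := by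
    have := hMuu.isHermitian
    simpa [Matrix.IsHermitian, Matrix.conjTranspose_eq_transpose_of_trivial] using this
  have hMuuInvSymm : (Muu⁻¹)ᵀ = Muu⁻¹ := by
    rw [Matrix.transpose_nonsing_inv, hMuuSymm]
  have hMuuInv : Muu⁻¹ * Muu = 1 := Matrix.nonsing_inv_mul Muu hMuuDet
  set D := K + Muu⁻¹ * Mux with hD
  -- key algebraic identity
  have hident : Mxx + Kᵀ * Mux + Muxᵀ * K + Kᵀ * Muu * K
      - (Mxx - Muxᵀ * Muu⁻¹ * Mux) = Dᵀ * Muu * D := by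
    have expand : Dᵀ * Muu * D =
        Kᵀ * Muu * K + Kᵀ * (Muu * Muu⁻¹) * Mux + Muxᵀ * ((Muu⁻¹)ᵀ * Muu) * K
          + Muxᵀ * (Muu⁻¹)ᵀ * (Muu * Muu⁻¹) * Mux := by
      rw [hD]
      simp only [Matrix.transpose_add, Matrix.transpose_mul, Matrix.add_mul, Matrix.mul_add]
      noncomm_ring [Matrix.mul_assoc]
    rw [expand, hMuuInvSymm, hMuuInv, Matrix.mul_nonsing_inv Muu hMuuDet]
    simp only [Matrix.mul_one, Matrix.one_mul]
    abel
  -- trace of X * DᵀMuuD is zero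
  have htr : (X * (Dᵀ * Muu * D)).trace = 0 := by
    rw [← hident, Matrix.mul_sub, Matrix.trace_sub]
    simp only [Matrix.mul_add] at hK ⊢
    rw [sub_eq_zero]
    exact hK
  -- factor X = A*A, Muu = B*B
  open scoped MatrixOrder in
  set A := CFC.sqrt X with hA
  open scoped MatrixOrder in
  set B := CFC.sqrt Muu with hB
  have hAA : A * A = X := by
    open scoped MatrixOrder in exact CFC.sqrt_mul_sqrt_self X hX.posSemidef.nonneg
  have hBB : B * B = Muu := by
    open scoped MatrixOrder in exact CFC.sqrt_mul_sqrt_self Muu hMuu.posSemidef.nonneg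
  have hAs : Aᵀ = A := by
    have := (open scoped MatrixOrder in (CFC.sqrt_nonneg X).posSemidef.isHermitian : A.IsHermitian)
    simpa [Matrix.IsHermitian, Matrix.conjTranspose_eq_transpose_of_trivial] using this
  have hBs : Bᵀ = B := by
    have := (open scoped MatrixOrder in (CFC.sqrt_nonneg Muu).posSemidef.isHermitian : B.IsHermitian)
    simpa [Matrix.IsHermitian, Matrix.conjTranspose_eq_transpose_of_trivial] using this
  have hAdet : IsUnit A.det := by
    have : A.det * A.det = X.det := by rw [← Matrix.det_mul, hAA]
    refine isUnit_iff_ne_zero.mpr fun h => ?_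
    rw [h, mul_zero] at this
    exact (ne_of_gt hX.det_pos) this.symm
  have hBdet : IsUnit B.det := by
    have : B.det * B.det = Muu.det := by rw [← Matrix.det_mul, hBB]
    refine isUnit_iff_ne_zero.mpr fun h => ?_
    rw [h, mul_zero] at this
    exact (ne_of_gt hMuu.det_pos) this.symm
  have htr2 : ((B * D * A)ᵀ * (B * D * A)).trace = 0 := by
    have : (B * D * A)ᵀ * (B * D * A) = A * (Dᵀ * Muu * D) * A := by
      simp only [Matrix.transpose_mul, hAs, hBs, ← hBB]
      noncomm_ring [Matrix.mul_assoc]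
    rw [this, Matrix.trace_mul_cycle, ← Matrix.mul_assoc, hAA]
    simpa [Matrix.mul_assoc] using htr
  have hBDA : B * D * A = 0 := trace_transpose_mul_self_eq_zero _ htr2
  have hDzero : D = 0 := by
    have h1 : B⁻¹ * (B * D * A) * A⁻¹ = 0 := by rw [hBDA]; simp
    calc D = B⁻¹ * (B * D * A) * A⁻¹ := by
          rw [Matrix.mul_assoc B D A, ← Matrix.mul_assoc B⁻¹ B,
            Matrix.nonsing_inv_mul B hBdet, Matrix.one_mul,
            Matrix.mul_assoc D A A⁻¹, Matrix.mul_nonsing_inv A hAdet, Matrix.mul_one]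
      _ = 0 := h1
  have := hDzero
  rw [hD] at this
  exact eq_neg_of_add_eq_zero_left this
end

section
/- Let M_1, …, M_{n_w} ∈ ℝ^{n_x × n_z} with n_z = n_x + n_u, W ∈ ℝ^{n_w × n_w} symmetric, E and E* as defined, K ∈ ℝ^{n_u × n_x} a gain with L_K = [I, Kᵀ] and policy map π_K(X) = L_Kᵀ X L_K, and let H ∈ ℝ^{n_z × n_z} and P ∈ ℝ^{n_x × n_x} be symmetric. Then the following are equivalent: (i) tr[X P] = tr[π_K(X) H] + tr[P · E(π_K(X))] for every symmetric X ∈ ℝ^{n_x × n_x}; (ii) P = L_K (H + E*(P)) L_Kᵀ. That is, the fixed-point condition J_π = T_π J_π for the linear value function J_π(X) = tr[P X] is equivalent to the generalized Lyapunov equation P = π_K*(H + E*(P)). -/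
open Matrix BigOperators

/-- The completely positive operator `E(Z) = Σ_{i,j} W i j • M i * Z * (M j)ᵀ`. -/
def cpE {n_w n_x n_u : ℕ} (W : Matrix (Fin n_w) (Fin n_w) ℝ)
    (M : Fin n_w → Matrix (Fin n_x) (Fin n_x ⊕ Fin n_u) ℝ)
    (Z : Matrix (Fin n_x ⊕ Fin n_u) (Fin n_x ⊕ Fin n_u) ℝ) :
    Matrix (Fin n_x) (Fin n_x) ℝ :=
  ∑ i : Fin n_w, ∑ j : Fin n_w, W i j • (M i * Z * (M j)ᵀ)

/-- Its adjoint `E*(P) = Σ_{i,j} W i j • (M i)ᵀ * P * M j`. -/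
def cpEstar {n_w n_x n_u : ℕ} (W : Matrix (Fin n_w) (Fin n_w) ℝ)
    (M : Fin n_w → Matrix (Fin n_x) (Fin n_x ⊕ Fin n_u) ℝ)
    (P : Matrix (Fin n_x) (Fin n_x) ℝ) :
    Matrix (Fin n_x ⊕ Fin n_u) (Fin n_x ⊕ Fin n_u) ℝ :=
  ∑ i : Fin n_w, ∑ j : Fin n_w, W i j • ((M i)ᵀ * P * M j)

/-- The matrix `L_K = [I, Kᵀ]` associated with a gain `K`. -/
def gainL {n_x n_u : ℕ} (K : Matrix (Fin n_u) (Fin n_x) ℝ) :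
    Matrix (Fin n_x) (Fin n_x ⊕ Fin n_u) ℝ :=
  Matrix.fromCols 1 Kᵀ

/-- The policy map `π_K(X) = L_Kᵀ X L_K`. -/
def policy {n_x n_u : ℕ} (K : Matrix (Fin n_u) (Fin n_x) ℝ)
    (X : Matrix (Fin n_x) (Fin n_x) ℝ) :
    Matrix (Fin n_x ⊕ Fin n_u) (Fin n_x ⊕ Fin n_u) ℝ :=
  (gainL K)ᵀ * X * gainL K

/-- A real symmetric matrix whose square has zero trace is zero. -/
lemma trace_sq_zero {n : ℕ} (A : Matrix (Fin n) (Fin n) ℝ) (h : A.IsSymm)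
    (h0 : (A * A).trace = 0) : A = 0 := by
  have key : ∑ i : Fin n, ∑ j : Fin n, A i j ^ 2 = 0 := by
    rw [← h0]
    simp only [Matrix.trace, Matrix.mul_apply, Matrix.diag, sq]
    refine Finset.sum_congr rfl fun i _ => Finset.sum_congr rfl fun j _ => ?_
    rw [h.apply i j]
  ext i j
  have hnn : ∀ i ∈ Finset.univ, (0:ℝ) ≤ ∑ j : Fin n, A i j ^ 2 := fun i _ =>
    Finset.sum_nonneg fun j _ => sq_nonneg _
  have h1 := (Finset.sum_eq_zero_iff_of_nonneg hnn).mp key i (Finset.mem_univ i)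
  have h2 := (Finset.sum_eq_zero_iff_of_nonneg
    (fun j _ => sq_nonneg (A i j))).mp h1 j (Finset.mem_univ j)
  simpa using pow_eq_zero_iff (n := 2) (by norm_num) |>.mp h2

lemma trace_cycle_term {a b : Type*} [Fintype a] [Fintype b]
    (P : Matrix a a ℝ) (A : Matrix a b ℝ) (Z : Matrix b b ℝ) (B : Matrix b a ℝ) :
    (P * (A * Z * B)).trace = ((B * P * A) * Z).trace := by
  simp only [← Matrix.mul_assoc]
  rw [Matrix.trace_mul_cycle]
  simp only [Matrix.mul_assoc]

lemma trace_sandwich {a b : Type*} [Fintype a] [Fintype b]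
    (L : Matrix a b ℝ) (X : Matrix a a ℝ) (A : Matrix b b ℝ) :
    ((Lᵀ * X * L) * A).trace = (X * (L * A * Lᵀ)).trace := by
  rw [Matrix.mul_assoc, Matrix.trace_mul_comm]
  simp only [← Matrix.mul_assoc]
  rw [Matrix.trace_mul_comm]
  simp only [Matrix.mul_assoc]

lemma trace_cpE_adjoint {n_w n_x n_u : ℕ} (W : Matrix (Fin n_w) (Fin n_w) ℝ)
    (hW : W.IsSymm) (M : Fin n_w → Matrix (Fin n_x) (Fin n_x ⊕ Fin n_u) ℝ)
    (P : Matrix (Fin n_x) (Fin n_x) ℝ)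
    (Z : Matrix (Fin n_x ⊕ Fin n_u) (Fin n_x ⊕ Fin n_u) ℝ) :
    (P * cpE W M Z).trace = (cpEstar W M P * Z).trace := by
  simp only [cpE, cpEstar, Matrix.mul_sum, Matrix.sum_mul, Matrix.mul_smul,
    Matrix.smul_mul, Matrix.trace_sum, Matrix.trace_smul, smul_eq_mul]
  rw [Finset.sum_comm]
  refine Finset.sum_congr rfl fun i _ => Finset.sum_congr rfl fun j _ => ?_
  rw [hW.apply i j, trace_cycle_term]

lemma cpEstar_isSymm {n_w n_x n_u : ℕ} (W : Matrix (Fin n_w) (Fin n_w) ℝ)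
    (hW : W.IsSymm) (M : Fin n_w → Matrix (Fin n_x) (Fin n_x ⊕ Fin n_u) ℝ)
    (P : Matrix (Fin n_x) (Fin n_x) ℝ) (hP : P.IsSymm) :
    (cpEstar W M P).IsSymm := by
  unfold cpEstar Matrix.IsSymm
  rw [Matrix.transpose_sum]
  rw [Finset.sum_comm]
  refine Finset.sum_congr rfl fun i _ => ?_
  rw [Matrix.transpose_sum]
  refine Finset.sum_congr rfl fun j _ => ?_
  rw [Matrix.transpose_smul, Matrix.transpose_mul, Matrix.transpose_mul,
    Matrix.transpose_transpose, hP, hW.apply i j, Matrix.mul_assoc]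

/-- The fixed-point condition `J_π = T_π J_π` for the linear value function
`J_π(X) = tr[P X]` is equivalent to the generalized Lyapunov equation
`P = L_K (H + E*(P)) L_Kᵀ`. -/
theorem lyapunov_iff_bellman_fixed_point (n_w n_x n_u : ℕ)
    (W : Matrix (Fin n_w) (Fin n_w) ℝ) (hW : W.IsSymm)
    (M : Fin n_w → Matrix (Fin n_x) (Fin n_x ⊕ Fin n_u) ℝ)
    (K : Matrix (Fin n_u) (Fin n_x) ℝ)
    (H : Matrix (Fin n_x ⊕ Fin n_u) (Fin n_x ⊕ Fin n_u) ℝ) (hH : H.IsSymm)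
    (P : Matrix (Fin n_x) (Fin n_x) ℝ) (hP : P.IsSymm) :
    (∀ X : Matrix (Fin n_x) (Fin n_x) ℝ, X.IsSymm →
        (X * P).trace = (policy K X * H).trace + (P * cpE W M (policy K X)).trace) ↔
      P = gainL K * (H + cpEstar W M P) * (gainL K)ᵀ := by
  set L := gainL K with hL
  set Q := L * (H + cpEstar W M P) * Lᵀ with hQ
  -- the RHS of the fixed-point identity equals tr[X Q]
  have key : ∀ X : Matrix (Fin n_x) (Fin n_x) ℝ,
      (policy K X * H).trace + (P * cpE W M (policy K X)).trace = (X * Q).trace := by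
    intro X
    have h1 : (policy K X * H).trace = (X * (L * H * Lᵀ)).trace := by
      rw [policy, trace_sandwich]
    have h2 : (P * cpE W M (policy K X)).trace
        = (X * (L * cpEstar W M P * Lᵀ)).trace := by
      rw [trace_cpE_adjoint W hW, Matrix.trace_mul_comm, policy, trace_sandwich]
    rw [h1, h2, hQ, Matrix.mul_add, Matrix.add_mul, Matrix.mul_add, Matrix.trace_add]
  have hQsymm : Q.IsSymm := by
    have hE := cpEstar_isSymm W hW M P hP
    unfold Matrix.IsSymm at *
    rw [hQ, Matrix.transpose_mul, Matrix.transpose_mul, Matrix.transpose_transpose,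
      Matrix.transpose_add, hH, hE, Matrix.mul_assoc]
  constructor
  · intro h
    have hD : (P - Q).IsSymm := hP.sub hQsymm
    have hh := h (P - Q) hD
    rw [key] at hh
    have hzero : ((P - Q) * (P - Q)).trace = 0 := by
      rw [Matrix.mul_sub, Matrix.trace_sub, hh, sub_self]
    exact sub_eq_zero.mp (trace_sq_zero (P - Q) hD hzero)
  · intro h X _
    rw [key, ← h]
end

section
/- Let M_1, …, M_{n_w} ∈ ℝ^{n_x × n_z} with n_z = n_x + n_u, W ∈ ℝ^{n_w × n_w} symmetric, E* as defined, Q ∈ ℝ^{n_x × n_x} and R ∈ ℝ^{n_u × n_u} symmetric, and H = diag(Q, R) ∈ ℝ^{n_z × n_z}. Suppose P ∈ ℝ^{n_x × n_x} is symmetric, let M = H + E*(P) with block partition M = [[M_xx, M_uxᵀ], [M_ux, M_uu]] (so M_uu = R + E*(P)_uu and M_ux = E*(P)_ux), assume M_uu is positive definite, and suppose P satisfies the generalized Riccati equation P = M_xx − M_uxᵀ M_uu^{-1} M_ux (i.e. P = Q + E*(P)_xx − E*(P)_uxᵀ (R + E*(P)_uu)^{-1} E*(P)_ux). Then for every symmetric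 positive semidefinite X ∈ ℝ^{n_x × n_x} and every gain K ∈ ℝ^{n_u × n_x}, tr[X · L_K M L_Kᵀ] ≥ tr[X P], with equality for K⋆ = −M_uu^{-1} M_ux = −(R + E*(P)_uu)^{-1} E*(P)_ux; i.e., J(X) = tr[X P] satisfies the Bellman equation J = T J with optimal gain K⋆. -/
open Matrix BigOperators

private lemma trace_mul_psd_nonneg {m : Type*} [Fintype m] [DecidableEq m]
    {X D : Matrix m m ℝ} (hX : X.PosSemidef) (hD : D.PosSemidef) :
    0 ≤ (X * D).trace := by
  obtain ⟨S, hS⟩ : ∃ S : Matrix m m ℝ, X = Sᴴ * S := by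
    open scoped MatrixOrder Matrix.Norms.L2Operator in
    exact CStarAlgebra.nonneg_iff_eq_star_mul_self.mp hX.nonneg
  obtain ⟨T, hT⟩ : ∃ T : Matrix m m ℝ, D = Tᴴ * T := by
    open scoped MatrixOrder Matrix.Norms.L2Operator in
    exact CStarAlgebra.nonneg_iff_eq_star_mul_self.mp hD.nonneg
  have h1 : X * D = Sᴴ * (S * Tᴴ * T) := by
    rw [hS, hT]; simp only [Matrix.mul_assoc]
  rw [h1, Matrix.trace_mul_comm]
  have h2 : S * Tᴴ * T * Sᴴ = (S * Tᴴ) * (S * Tᴴ)ᴴ := by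
    rw [Matrix.conjTranspose_mul, Matrix.conjTranspose_conjTranspose]
    simp only [Matrix.mul_assoc]
  rw [h2]
  simp only [Matrix.trace, Matrix.diag, Matrix.mul_apply,
    Matrix.conjTranspose_apply, star_trivial]
  exact Finset.sum_nonneg fun i _ =>
    Finset.sum_nonneg fun j _ => mul_self_nonneg _

/-- If `P` solves the generalized Riccati equation
`P = M_xx − M_uxᵀ M_uu⁻¹ M_ux` with `M = H + E*(P)`, `H = diag(Q, R)` and
`M_uu ≻ 0`, then `J(X) = tr[X P]` satisfies the Bellman equation: for every
`X ⪰ 0` the cost `tr[X · L_K M L_Kᵀ]` is minimized over gains `K` with minimum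
value `tr[X P]`, attained at `K⋆ = −M_uu⁻¹ M_ux`. -/
theorem riccati_implies_bellman (n_w n_x n_u : ℕ)
    (W : Matrix (Fin n_w) (Fin n_w) ℝ) (hW : W.IsSymm)
    (M : Fin n_w → Matrix (Fin n_x) (Fin n_x ⊕ Fin n_u) ℝ)
    (Q : Matrix (Fin n_x) (Fin n_x) ℝ) (hQ : Q.IsSymm)
    (R : Matrix (Fin n_u) (Fin n_u) ℝ) (hR : R.IsSymm)
    (H : Matrix (Fin n_x ⊕ Fin n_u) (Fin n_x ⊕ Fin n_u) ℝ)
    (hH : H = Matrix.fromBlocks Q 0 0 R)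
    (P : Matrix (Fin n_x) (Fin n_x) ℝ) (hP : P.IsSymm)
    (Mfull : Matrix (Fin n_x ⊕ Fin n_u) (Fin n_x ⊕ Fin n_u) ℝ)
    (hMfull : Mfull = H + cpEstar W M P)
    (hMuu : Mfull.toBlocks₂₂.PosDef)
    (hRic : P = Mfull.toBlocks₁₁ -
      (Mfull.toBlocks₂₁)ᵀ * (Mfull.toBlocks₂₂)⁻¹ * Mfull.toBlocks₂₁) :
    ∀ X : Matrix (Fin n_x) (Fin n_x) ℝ, X.PosSemidef →
      (∀ K : Matrix (Fin n_u) (Fin n_x) ℝ,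
          (X * (gainL K * Mfull * (gainL K)ᵀ)).trace ≥ (X * P).trace) ∧
        (X * (gainL (-((Mfull.toBlocks₂₂)⁻¹ * Mfull.toBlocks₂₁)) * Mfull *
              (gainL (-((Mfull.toBlocks₂₂)⁻¹ * Mfull.toBlocks₂₁)))ᵀ)).trace =
          (X * P).trace := by
  -- Notation for the blocks
  set A := Mfull.toBlocks₁₁ with hA
  set B := Mfull.toBlocks₂₁ with hB
  set C := Mfull.toBlocks₂₂ with hC
  -- Mfull is symmetric
  have hEsymm : (cpEstar W M P).IsSymm := by
    unfold Matrix.IsSymm cpEstar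
    rw [Matrix.transpose_sum]
    rw [Finset.sum_comm]
    refine Finset.sum_congr rfl fun i _ => ?_
    rw [Matrix.transpose_sum]
    refine Finset.sum_congr rfl fun j _ => ?_
    rw [Matrix.transpose_smul, Matrix.transpose_mul, Matrix.transpose_mul,
      Matrix.transpose_transpose, hP.eq, hW.apply, Matrix.mul_assoc]
  have hMsym : Mfull.IsSymm := by
    rw [hMfull]
    refine Matrix.IsSymm.add ?_ hEsymm
    rw [hH]
    unfold Matrix.IsSymm
    rw [Matrix.fromBlocks_transpose, hQ.eq, hR.eq]
    simp
  have h12 : Mfull.toBlocks₁₂ = Bᵀ := by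
    ext i j
    simp only [Matrix.transpose_apply, hB, Matrix.toBlocks₁₂, Matrix.toBlocks₂₁,
      Matrix.of_apply]
    exact hMsym.apply _ _
  have hCsymm : Cᵀ = C := by
    ext i j
    simp only [Matrix.transpose_apply, hC, Matrix.toBlocks₂₂, Matrix.of_apply]
    exact hMsym.apply _ _
  -- C is invertible
  have hCunit : IsUnit C.det := isUnit_iff_ne_zero.mpr hMuu.det_pos.ne'
  have hCC : C * C⁻¹ = 1 := Matrix.mul_nonsing_inv C hCunit
  have hCC' : C⁻¹ * C = 1 := Matrix.nonsing_inv_mul C hCunit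
  have hCinvT : C⁻¹ᵀ = C⁻¹ := by
    rw [Matrix.transpose_nonsing_inv, hCsymm]
  -- Block decomposition of Mfull
  have hMblocks : Mfull = Matrix.fromBlocks A Bᵀ B C := by
    rw [← h12]
    exact (Matrix.fromBlocks_toBlocks Mfull).symm
  -- Key identity
  have key : ∀ K : Matrix (Fin n_u) (Fin n_x) ℝ,
      gainL K * Mfull * (gainL K)ᵀ =
        P + (K + C⁻¹ * B)ᵀ * C * (K + C⁻¹ * B) := by
    intro K
    have hL : (gainL K)ᵀ = Matrix.fromRows 1 K := by
      unfold gainL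
      rw [Matrix.transpose_fromCols, Matrix.transpose_one,
        Matrix.transpose_transpose]
    have lhs : gainL K * Mfull * (gainL K)ᵀ =
        A + Kᵀ * B + (Bᵀ * K + Kᵀ * (C * K)) := by
      rw [hMblocks, hL]
      unfold gainL
      rw [Matrix.fromCols_mul_fromBlocks, Matrix.fromCols_mul_fromRows]
      simp only [Matrix.one_mul, Matrix.mul_one, Matrix.add_mul,
        Matrix.mul_assoc]
    have rhs : (K + C⁻¹ * B)ᵀ * C * (K + C⁻¹ * B) =
        Kᵀ * B + (Bᵀ * K + Kᵀ * (C * K)) + Bᵀ * (C⁻¹ * B) := by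
      rw [Matrix.transpose_add, Matrix.transpose_mul, hCinvT]
      rw [Matrix.add_mul, Matrix.add_mul, Matrix.mul_add, Matrix.mul_add]
      have e1 : Bᵀ * C⁻¹ * C = Bᵀ := by
        rw [Matrix.mul_assoc, hCC', Matrix.mul_one]
      have e2 : Kᵀ * C * (C⁻¹ * B) = Kᵀ * B := by
        rw [Matrix.mul_assoc, ← Matrix.mul_assoc C, hCC, Matrix.one_mul]
      rw [e1, e2, Matrix.mul_assoc Kᵀ C K]
      abel
    rw [lhs, rhs, hRic]
    rw [Matrix.mul_assoc Bᵀ C⁻¹ B]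
    abel
  intro X hX
  constructor
  · intro K
    rw [key K, Matrix.mul_add, Matrix.trace_add]
    have hpsd : ((K + C⁻¹ * B)ᵀ * C * (K + C⁻¹ * B)).PosSemidef := by
      have := hMuu.posSemidef.conjTranspose_mul_mul_same (K + C⁻¹ * B)
      simpa using this
    have := trace_mul_psd_nonneg hX hpsd
    linarith
  · rw [key (-(C⁻¹ * B))]
    simp
end

section
/- Let M_1, …, M_{n_w} ∈ ℝ^{n_x × n_z} with n_z = n_x + n_u, W ∈ ℝ^{n_w × n_w} symmetric, E and E* as defined, K ∈ ℝ^{n_u × n_x} a gain with L_K = [I, Kᵀ] and π_K(X) = L_Kᵀ X L_K, and H ∈ ℝ^{n_z × n_z} symmetric. Suppose P ∈ ℝ^{n_x × n_x} is symmetric and satisfies P = L_K (H + E*(P)) L_Kᵀ, and let (X_t)_{t ∈ ℕ} satisfy X_{t+1} = E(π_K(X_t)). If tr[P X_t] → 0 as t → ∞, then the series Σ_{t=0}^{∞} tr[H · π_K(X_t)] converges with sum tr[P X_0]; i.e., the infinite-horizon closed-loop cost equals the value function J_π(X_0) = tr[P X_0]. -/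
open Matrix BigOperators

/-- If `P` solves the Lyapunov equation `P = L_K (H + E*(P)) L_Kᵀ`, the
closed-loop second moments satisfy `X_{t+1} = E(π_K(X_t))` and
`tr[P X_t] → 0`, then the infinite-horizon closed-loop cost
`Σ_{t=0}^{∞} tr[H π_K(X_t)]` converges with sum `tr[P X_0]`. -/
theorem closed_loop_infinite_cost (n_w n_x n_u : ℕ)
    (W : Matrix (Fin n_w) (Fin n_w) ℝ) (hW : W.IsSymm)
    (M : Fin n_w → Matrix (Fin n_x) (Fin n_x ⊕ Fin n_u) ℝ)
    (K : Matrix (Fin n_u) (Fin n_x) ℝ)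
    (H : Matrix (Fin n_x ⊕ Fin n_u) (Fin n_x ⊕ Fin n_u) ℝ) (hH : H.IsSymm)
    (P : Matrix (Fin n_x) (Fin n_x) ℝ) (hP : P.IsSymm)
    (hLyap : P = gainL K * (H + cpEstar W M P) * (gainL K)ᵀ)
    (X : ℕ → Matrix (Fin n_x) (Fin n_x) ℝ) (hXsymm : ∀ t, (X t).IsSymm)
    (hdyn : ∀ t, X (t + 1) = cpE W M (policy K (X t)))
    (hlim : Filter.Tendsto (fun t => (P * X t).trace) Filter.atTop (nhds 0)) :
    Filter.Tendsto (fun T => ∑ t ∈ Finset.range T, (H * policy K (X t)).trace)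
      Filter.atTop (nhds ((P * X 0).trace)) := by
  have hadj : ∀ Z : Matrix (Fin n_x ⊕ Fin n_u) (Fin n_x ⊕ Fin n_u) ℝ,
      (P * cpE W M Z).trace = (cpEstar W M P * Z).trace := by
    intro Z
    unfold cpE cpEstar
    simp only [Matrix.mul_sum, Matrix.sum_mul, Matrix.trace_sum,
      Matrix.mul_smul, Matrix.smul_mul, Matrix.trace_smul]
    rw [Finset.sum_comm]
    refine Finset.sum_congr rfl fun i _ => Finset.sum_congr rfl fun j _ => ?_
    have hw : W j i = W i j := hW.apply i j
    rw [hw]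
    congr 1
    rw [Matrix.trace_mul_comm, Matrix.mul_assoc (M j * Z) (M i)ᵀ P,
      Matrix.trace_mul_comm, ← Matrix.mul_assoc]
  have hcyc : ∀ (A : Matrix (Fin n_x) (Fin n_x ⊕ Fin n_u) ℝ)
      (Q : Matrix (Fin n_x ⊕ Fin n_u) (Fin n_x ⊕ Fin n_u) ℝ)
      (Y : Matrix (Fin n_x) (Fin n_x) ℝ),
      (A * Q * Aᵀ * Y).trace = (Q * (Aᵀ * Y * A)).trace := by
    intro A Q Y
    rw [Matrix.mul_assoc (A * Q) Aᵀ Y, Matrix.trace_mul_comm,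
      ← Matrix.mul_assoc, Matrix.trace_mul_comm]
  have hstep : ∀ t, (H * policy K (X t)).trace
      = (P * X t).trace - (P * X (t + 1)).trace := by
    intro t
    have h1 : (P * X t).trace
        = ((H + cpEstar W M P) * policy K (X t)).trace := by
      conv_lhs => rw [hLyap]
      unfold policy
      exact hcyc (gainL K) (H + cpEstar W M P) (X t)
    rw [hdyn t, hadj, h1, Matrix.add_mul, Matrix.trace_add]
    ring
  have hsum : ∀ T, ∑ t ∈ Finset.range T, (H * policy K (X t)).trace
      = (P * X 0).trace - (P * X T).trace := by
    intro T
    calc ∑ t ∈ Finset.range T, (H * policy K (X t)).trace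
        = ∑ t ∈ Finset.range T, ((P * X t).trace - (P * X (t + 1)).trace) :=
          Finset.sum_congr rfl fun t _ => hstep t
      _ = (P * X 0).trace - (P * X T).trace :=
          Finset.sum_range_sub' (fun t => (P * X t).trace) T
  simp only [hsum]
  have := (Filter.Tendsto.const_sub ((P * X 0).trace) hlim)
  simpa using this
end
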